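/- Let S be a minimal dominating set of a graph H and D a minimal dominating set of a graph G (of order at least 2). If u ∈ D satisfies pn[u,D] = {u}, then ({u} × S) ∪ ((D−{u}) × V(H)) is a dominating set of G □ H. If moreover u is the unique vertex of D with pn[u,D] = {u}, this set is a minimal dominating set of G □ H. -/

import Mathlib

open SimpleGraph

variable {V : Type*}

/-- Closed neighborhood of a vertex. -/
def closedNbhd (G : SimpleGraph V) (v : V) : Set V := insert v (G.neighborSet v)

/-- Closed neighborhood of a set of vertices. -/
def closedNbhdSet (G : SimpleGraph V) (A : Set V) : Set V := ⋃ a ∈ A, closedNbhd G a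

/-- `D` is a dominating set of `G`. -/
def IsDomSet (G : SimpleGraph V) (D : Set V) : Prop :=
  ∀ v, ∃ u ∈ D, v ∈ closedNbhd G u

/-- `D` is a minimal dominating set of `G`. -/
def IsMinimalDomSet (G : SimpleGraph V) (D : Set V) : Prop :=
  IsDomSet G D ∧ ∀ D' ⊆ D, IsDomSet G D' → D' = D

/-- The domination number `γ`. -/
noncomputable def domNum (G : SimpleGraph V) : ℕ :=
  sInf {n | ∃ D : Set V, IsDomSet G D ∧ D.ncard = n}

/-- The upper domination number `Γ`. -/
noncomputable def upperDomNum (G : SimpleGraph V) : ℕ :=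
  sSup {n | ∃ D : Set V, IsMinimalDomSet G D ∧ D.ncard = n}

/-- A graph is well-dominated if `γ = Γ`. -/
def WellDominated (G : SimpleGraph V) : Prop := domNum G = upperDomNum G

/-- `A` is an independent set of `G`. -/
def IsIndep (G : SimpleGraph V) (A : Set V) : Prop :=
  ∀ u ∈ A, ∀ v ∈ A, ¬ G.Adj u v

/-- `A` is a maximal independent set of `G`. -/
def IsMaxIndep (G : SimpleGraph V) (A : Set V) : Prop :=
  IsIndep G A ∧ ∀ B, IsIndep G B → A ⊆ B → B = A

/-- The independence number `α`. -/
noncomputable def indepNum (G : SimpleGraph V) : ℕ :=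
  sSup {n | ∃ A : Set V, IsIndep G A ∧ A.ncard = n}

/-- The strong product of two graphs. -/
def strongProd {α β : Type*} (G : SimpleGraph α) (H : SimpleGraph β) :
    SimpleGraph (α × β) where
  Adj x y := x ≠ y ∧ (x.1 = y.1 ∨ G.Adj x.1 y.1) ∧ (x.2 = y.2 ∨ H.Adj x.2 y.2)
  symm := ⟨by
    rintro x y ⟨h1, h2, h3⟩
    refine ⟨h1.symm, ?_, ?_⟩
    · cases h2 with
      | inl h => exact Or.inl h.symm
      | inr h => exact Or.inr h.symm
    · cases h3 with
      | inl h => exact Or.inl h.symm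
      | inr h => exact Or.inr h.symm⟩
  loopless := ⟨by rintro x ⟨h1, _⟩; exact h1 rfl⟩

/-- The direct (tensor) product of two graphs. -/
def tensorProd {α β : Type*} (G : SimpleGraph α) (H : SimpleGraph β) :
    SimpleGraph (α × β) where
  Adj x y := G.Adj x.1 y.1 ∧ H.Adj x.2 y.2
  symm := ⟨fun _ _ h => ⟨h.1.symm, h.2.symm⟩⟩
  loopless := ⟨fun _ h => G.ne_of_adj h.1 rfl⟩

/-- The corona `G ⊙ K₁`. -/
def corona {α : Type*} (G : SimpleGraph α) : SimpleGraph (α ⊕ α) :=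
  SimpleGraph.fromRel (fun x y =>
    match x, y with
    | Sum.inl u, Sum.inl v => G.Adj u v
    | Sum.inl u, Sum.inr v => u = v
    | _, _ => False)

/-- The private neighborhood `pn[u,D] = N[u] - N[D - {u}]`. -/
def privateNbhd (G : SimpleGraph V) (D : Set V) (u : V) : Set V :=
  {x | x ∈ closedNbhd G u ∧ ∀ d ∈ D, d ≠ u → x ∉ closedNbhd G d}

/-- A set `D` is open irredundant if every vertex of `D` has an external
private neighbor. -/
def IsOpenIrred (G : SimpleGraph V) (D : Set V) : Prop :=
  ∀ u ∈ D, ∃ x ∈ G.neighborSet u, ∀ d ∈ D, d ≠ u → x ∉ closedNbhd G d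

lemma mem_closedNbhd' {V : Type*} (G : SimpleGraph V) (u v : V) :
    v ∈ closedNbhd G u ↔ v = u ∨ G.Adj u v := by
  simp [closedNbhd, SimpleGraph.mem_neighborSet]

lemma minDom_pn_nonempty {V : Type*} (G : SimpleGraph V) {S : Set V}
    (hS : IsMinimalDomSet G S) {s : V} (hs : s ∈ S) :
    (privateNbhd G S s).Nonempty := by
  by_contra h
  rw [Set.not_nonempty_iff_eq_empty] at h
  have hdom : IsDomSet G (S \ {s}) := by
    intro v
    obtain ⟨t, ht, hv⟩ := hS.1 v
    by_cases hts : t = s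
    · subst hts
      have hnp : v ∉ privateNbhd G S t := by rw [h]; exact Set.notMem_empty v
      simp only [privateNbhd, Set.mem_setOf_eq] at hnp
      push_neg at hnp
      obtain ⟨d, hd, hdne, hvd⟩ := hnp hv
      exact ⟨d, ⟨hd, hdne⟩, hvd⟩
    · exact ⟨t, ⟨ht, hts⟩, hv⟩
  have heq := hS.2 (S \ {s}) Set.diff_subset hdom
  have hns : s ∉ S \ {s} := fun h => h.2 rfl
  rw [heq] at hns
  exact hns hs

/-- If `u ∈ D` (a minimal dominating set of `G`) has `pn[u,D] = {u}` and `S` is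
a minimal dominating set of `H`, then `({u} × S) ∪ ((D - {u}) × V(H))` dominates
`G □ H`; if `u` is the unique such vertex, this set is a minimal dominating set. -/
theorem stmt_14 {α β : Type*} [Fintype α] [Fintype β]
    (G : SimpleGraph α) (H : SimpleGraph β) (hα : 2 ≤ Fintype.card α)
    (S : Set β) (hS : IsMinimalDomSet H S)
    (D : Set α) (hD : IsMinimalDomSet G D)
    (u : α) (hu : u ∈ D) (hpn : privateNbhd G D u = {u}) :
    IsDomSet (G □ H) (({u} : Set α) ×ˢ S ∪ (D \ {u}) ×ˢ (Set.univ : Set β)) ∧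
    ((∀ v ∈ D, privateNbhd G D v = {v} → v = u) →
      IsMinimalDomSet (G □ H)
        (({u} : Set α) ×ˢ S ∪ (D \ {u}) ×ˢ (Set.univ : Set β))) := by
  set T : Set (α × β) := ({u} : Set α) ×ˢ S ∪ (D \ {u}) ×ˢ (Set.univ : Set β) with hT
  have hupn : u ∈ privateNbhd G D u := by rw [hpn]; rfl
  have hdom : IsDomSet (G □ H) T := by
    rintro ⟨x, y⟩
    by_cases hx : ∃ d ∈ D, d ≠ u ∧ x ∈ closedNbhd G d
    · obtain ⟨d, hd, hdu, hxd⟩ := hx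
      refine ⟨(d, y), Or.inr ⟨⟨hd, hdu⟩, Set.mem_univ y⟩, ?_⟩
      rw [mem_closedNbhd'] at hxd ⊢
      rcases hxd with h | h
      · exact Or.inl (by simp [h])
      · exact Or.inr (SimpleGraph.boxProd_adj.mpr (Or.inl ⟨h, rfl⟩))
    · push_neg at hx
      obtain ⟨d, hd, hxd⟩ := hD.1 x
      have hdu : d = u := by
        by_contra hne
        exact hx d hd hne hxd
      rw [hdu] at hxd
      have hxu : x = u := by
        have hmem : x ∈ privateNbhd G D u := ⟨hxd, fun e he heu hxe => hx e he heu hxe⟩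
        rw [hpn] at hmem
        exact hmem
      obtain ⟨s, hs, hys⟩ := hS.1 y
      refine ⟨(u, s), Or.inl ⟨rfl, hs⟩, ?_⟩
      rw [mem_closedNbhd'] at hys ⊢
      rcases hys with h | h
      · exact Or.inl (by simp [hxu, h])
      · exact Or.inr (SimpleGraph.boxProd_adj.mpr (Or.inr ⟨h, hxu.symm⟩))
  refine ⟨hdom, fun huniq => ⟨hdom, fun T' hsub hT' => ?_⟩⟩
  have hpriv : ∀ w ∈ T, ∃ p, p ∈ closedNbhd (G □ H) w ∧
      ∀ t ∈ T, t ≠ w → p ∉ closedNbhd (G □ H) t := by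
    rintro ⟨a, b⟩ (⟨ha, hb⟩ | ⟨⟨had, hau⟩, -⟩)
    · -- a = u, b ∈ S
      have hau : a = u := ha
      obtain ⟨y, hy⟩ := minDom_pn_nonempty H hS hb
      refine ⟨(a, y), ?_, ?_⟩
      · rw [mem_closedNbhd']
        rcases (mem_closedNbhd' H b y).mp hy.1 with h | h
        · exact Or.inl (by simp [h])
        · exact Or.inr (SimpleGraph.boxProd_adj.mpr (Or.inr ⟨h, rfl⟩))
      · rintro ⟨c, e⟩ (⟨hc, he⟩ | ⟨hc, -⟩) hne hmem
        · have hca : c = a := (show c = u from hc).trans hau.symm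
          have heb : e ≠ b := fun h => hne (by rw [h, hca])
          rw [mem_closedNbhd'] at hmem
          have hyNe : y ∈ closedNbhd H e := by
            rw [mem_closedNbhd']
            rcases hmem with h | h
            · exact Or.inl (congrArg Prod.snd h)
            · rcases SimpleGraph.boxProd_adj.mp h with ⟨-, h2⟩ | ⟨h1, -⟩
              · exact Or.inl h2.symm
              · exact Or.inr h1
          exact hy.2 e he heb hyNe
        · rw [mem_closedNbhd'] at hmem
          rcases hmem with h | h
          · exact hc.2 (((congrArg Prod.fst h).symm).trans hau)
          · rcases SimpleGraph.boxProd_adj.mp h with ⟨h1, -⟩ | ⟨-, h2⟩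
            · exact hupn.2 c hc.1 hc.2 ((mem_closedNbhd' G c u).mpr (Or.inr (hau ▸ h1)))
            · exact hc.2 (h2.trans hau)
    · -- a ∈ D \ {u}
      obtain ⟨x, hx, hxa⟩ : ∃ x, x ∈ privateNbhd G D a ∧ x ≠ a := by
        obtain ⟨x, hx⟩ := minDom_pn_nonempty G hD had
        by_contra h
        push_neg at h
        have hxa : x = a := h x hx
        have hpa : privateNbhd G D a = {a} := by
          apply Set.Subset.antisymm
          · exact fun z hz => h z hz
          · intro z hz
            rw [Set.mem_singleton_iff] at hz
            subst hz
            exact hxa ▸ hx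
        exact hau (huniq a had hpa)
      have hadjax : G.Adj a x := by
        rcases (mem_closedNbhd' G a x).mp hx.1 with h | h
        · exact absurd h hxa
        · exact h
      have hxnu : x ∉ closedNbhd G u := hx.2 u hu (fun h => hau h.symm)
      refine ⟨(x, b), ?_, ?_⟩
      · exact (mem_closedNbhd' _ _ _).mpr
          (Or.inr (SimpleGraph.boxProd_adj.mpr (Or.inl ⟨hadjax, rfl⟩)))
      · rintro ⟨c, e⟩ (⟨hc, he⟩ | ⟨hc, -⟩) hne hmem
        · have hcu : c = u := hc
          rw [mem_closedNbhd'] at hmem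
          apply hxnu
          rw [mem_closedNbhd']
          rcases hmem with h | h
          · exact Or.inl ((congrArg Prod.fst h).trans hcu)
          · rcases SimpleGraph.boxProd_adj.mp h with ⟨h1, -⟩ | ⟨-, h2⟩
            · exact Or.inr (hcu ▸ h1)
            · exact Or.inl (h2.symm.trans hcu)
        · by_cases hca : c = a
          · have heb : e ≠ b := fun h => hne (by rw [h, hca])
            rw [mem_closedNbhd'] at hmem
            rcases hmem with h | h
            · exact hxa ((congrArg Prod.fst h).trans hca)
            · rcases SimpleGraph.boxProd_adj.mp h with ⟨-, h1⟩ | ⟨-, h2⟩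
              · exact heb h1
              · exact hxa (h2.symm.trans hca)
          · have hxnc : x ∉ closedNbhd G c := hx.2 c hc.1 hca
            apply hxnc
            rw [mem_closedNbhd'] at hmem ⊢
            rcases hmem with h | h
            · exact Or.inl (congrArg Prod.fst h)
            · rcases SimpleGraph.boxProd_adj.mp h with ⟨h1, -⟩ | ⟨-, h2⟩
              · exact Or.inr h1
              · exact Or.inl h2.symm
  refine Set.Subset.antisymm hsub ?_
  intro w hw
  obtain ⟨p, hp1, hp2⟩ := hpriv w hw
  obtain ⟨t, ht', hpt⟩ := hT' p
  by_cases htw : t = w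
  · exact htw ▸ ht'
  · exact absurd hpt (hp2 t (hsub ht') htw)
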